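/- Let (V, ω) be a finite-dimensional symplectic vector space and M a symplectically diagonalizable endomorphism of V. Then M is symplectically similar to its symplectic adjoint M^{*ω}: there exists P ∈ Sp(V, ω) with P^{-1}MP = M^{*ω}. -/

import Mathlib

theorem stmt_19 {K V : Type*} [Field K] [AddCommGroup V] [Module K V]
    [FiniteDimensional K V] (n : ℕ) (hdim : Module.finrank K V = 2 * n)
    (ω : V →ₗ[K] V →ₗ[K] K)
    (halt : ∀ v : V, ω v v = 0)
    (hnd : ∀ v : V, (∀ w : V, ω v w = 0) → v = 0)
    (M Mstar : Module.End K V)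
    (hadj : ∀ v w : V, ω (M v) w = ω v (Mstar w))
    (hdiag : ∃ b : Module.Basis (Fin n ⊕ Fin n) K V,
      (∀ i j, ω (b (Sum.inl i)) (b (Sum.inl j)) = 0) ∧
      (∀ i j, ω (b (Sum.inr i)) (b (Sum.inr j)) = 0) ∧
      (∀ i j, ω (b (Sum.inl i)) (b (Sum.inr j)) = if i = j then 1 else 0) ∧
      (∀ k, ∃ c : K, M (b k) = c • b k)) :
    ∃ P : V ≃ₗ[K] V, (∀ v w : V, ω (P v) (P w) = ω v w) ∧
      P.symm.toLinearMap ∘ₗ M ∘ₗ P.toLinearMap = Mstar := by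
  obtain ⟨b, h1, h2, h3, h4⟩ := hdiag
  choose μ hμ using h4
  -- skew symmetry
  have hskew : ∀ v w : V, ω w v = - ω v w := by
    intro v w
    have h := halt (v + w)
    simp only [map_add, LinearMap.add_apply, halt] at h
    linear_combination h
  -- ω (f_i) (e_j) = -δ
  have h3' : ∀ i j, ω (b (Sum.inr i)) (b (Sum.inl j)) = if j = i then -1 else 0 := by
    intro i j
    rw [hskew, h3]
    split <;> simp
  -- right nondegeneracy
  have hnd' : ∀ v : V, (∀ w : V, ω w v = 0) → v = 0 := by
    intro v h
    refine hnd v fun w => ?_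
    have h2 := hskew v w
    rw [h w] at h2
    exact neg_eq_zero.mp h2.symm
  -- Mstar on basis
  have hMstar : ∀ k, Mstar (b k) = μ (Sum.swap k) • b k := by
    intro k
    have key : ∀ j, ω (b j) (Mstar (b k) - μ (Sum.swap k) • b k) = 0 := by
      intro j
      have e1 : ω (b j) (Mstar (b k)) = μ j * ω (b j) (b k) := by
        rw [← hadj, hμ, map_smul, LinearMap.smul_apply, smul_eq_mul]
      simp only [map_sub, map_smul, smul_eq_mul, e1]
      rcases j with i | i <;> rcases k with i' | i'
      · rw [h1]; ring
      · simp only [Sum.swap_inr, h3]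
        by_cases h : i = i' <;> simp [h] <;> ring
      · simp only [Sum.swap_inl, h3']
        by_cases h : i' = i <;> simp [h] <;> ring
      · rw [h2]; ring
    have hz : Mstar (b k) - μ (Sum.swap k) • b k = 0 := by
      refine hnd' _ fun w => ?_
      have : ω.flip (Mstar (b k) - μ (Sum.swap k) • b k) = 0 := by
        apply b.ext
        intro j
        simpa using key j
      have := congrArg (fun f => f w) this
      simpa using this
    have := sub_eq_zero.mp hz
    exact this
  -- define P
  set φ : Fin n ⊕ Fin n → V :=
    Sum.elim (fun i => b (Sum.inr i)) (fun i => -b (Sum.inl i)) with hφ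
  set ψ : Fin n ⊕ Fin n → V :=
    Sum.elim (fun i => -b (Sum.inr i)) (fun i => b (Sum.inl i)) with hψ
  set f : V →ₗ[K] V := b.constr K φ with hf
  set g : V →ₗ[K] V := b.constr K ψ with hg
  have hfb : ∀ k, f (b k) = φ k := fun k => b.constr_basis K φ k
  have hgb : ∀ k, g (b k) = ψ k := fun k => b.constr_basis K ψ k
  have hgf : g ∘ₗ f = LinearMap.id := by
    apply b.ext
    intro k
    rcases k with i | i <;>
      simp [hfb, hgb, hφ, hψ]
  have hfg : f ∘ₗ g = LinearMap.id := by
    apply b.ext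
    intro k
    rcases k with i | i <;>
      simp [hfb, hgb, hφ, hψ]
  refine ⟨LinearEquiv.ofLinear f g hfg hgf, ?_, ?_⟩
  · -- symplectic
    have hbil : ω.compl₁₂ f f = ω := by
      apply b.ext
      intro k
      apply b.ext
      intro l
      simp only [LinearMap.compl₁₂_apply, hfb]
      rcases k with i | i <;> rcases l with i' | i' <;>
        simp only [hφ, Sum.elim_inl, Sum.elim_inr, map_neg, LinearMap.neg_apply,
          h1, h2, h3, h3', neg_neg, neg_zero]
      all_goals
        rcases eq_or_ne i i' with rfl | h
        · simp
        · simp [h, h.symm]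
    intro v w
    have := congrArg (fun B => B v w) hbil
    simpa using this
  · -- conjugation
    apply b.ext
    intro k
    simp only [LinearMap.comp_apply, LinearEquiv.coe_coe,
      LinearEquiv.ofLinear_apply, LinearEquiv.ofLinear_symm_apply]
    rcases k with i | i
    · rw [show f (b (Sum.inl i)) = b (Sum.inr i) from hfb _, hμ, map_smul,
        show g (b (Sum.inr i)) = b (Sum.inl i) from hgb _, hMstar]
      simp
    · rw [show f (b (Sum.inr i)) = -b (Sum.inl i) from hfb _, map_neg, hμ, map_neg, map_smul,
        show g (b (Sum.inl i)) = -b (Sum.inr i) from hgb _, hMstar]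
      simp
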